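/- If (1,b,c,d) is a Diophantine D(−1)-quadruple with 10^13 < b < c < d such that b = r_k² + 1 and c = r_{k+1}² + 1 for some integer f ≥ 2 and some integer k ≥ 1, then γ^{2k−1} < b, where γ = f + √(f²−1). -/

import Mathlib

set_option maxHeartbeats 800000

/-- If (1,b,c,d) is a D(−1)-quadruple with 10^13 < b < c < d and b = r_k² + 1,
c = r_{k+1}² + 1 for some f ≥ 2 and k ≥ 1, then γ^{2k−1} < b, where
γ = f + √(f²−1). -/
theorem stmt4 (b c d : ℤ)
    (hb : 10 ^ 13 < b) (hbc : b < c) (hcd : c < d)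
    (h1 : IsSquare (b - 1)) (h2 : IsSquare (c - 1)) (h3 : IsSquare (d - 1))
    (h4 : IsSquare (b * c - 1)) (h5 : IsSquare (b * d - 1)) (h6 : IsSquare (c * d - 1))
    (f : ℤ) (hf : 2 ≤ f) (r : ℕ → ℤ)
    (hr0 : r 0 = 0) (hr1 : r 1 = f)
    (hrec : ∀ j, r (j + 2) = 2 * f * r (j + 1) - r j)
    (k : ℕ) (hk : 1 ≤ k)
    (hbk : b = (r k) ^ 2 + 1) (hck : c = (r (k + 1)) ^ 2 + 1) :
    ((f : ℝ) + Real.sqrt ((f : ℝ) ^ 2 - 1)) ^ (2 * k - 1) < (b : ℝ) := by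
  have hfR : (2 : ℝ) ≤ (f : ℝ) := by exact_mod_cast hf
  set s : ℝ := Real.sqrt ((f : ℝ) ^ 2 - 1) with hs_def
  have hfsq : (0:ℝ) ≤ (f:ℝ)^2 - 1 := by nlinarith
  have hs2 : s ^ 2 = (f:ℝ)^2 - 1 := Real.sq_sqrt hfsq
  have hs0 : 0 ≤ s := Real.sqrt_nonneg _
  have hspos : 0 < s := by
    rcases hs0.lt_or_eq with h | h
    · exact h
    · exfalso; nlinarith [hs2]
  have hs1 : (f:ℝ) - 1 ≤ s := by nlinarith [hs2, hs0]
  have hsltf : s < (f:ℝ) := by nlinarith [hs2, hs0]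
  set γ : ℝ := (f:ℝ) + s with hγ_def
  set δ : ℝ := (f:ℝ) - s with hδ_def
  have hγpos : 0 < γ := by positivity
  have hδpos : 0 < δ := by simp [hδ_def]; linarith
  have hγδ : γ * δ = 1 := by rw [hγ_def, hδ_def]; nlinarith [hs2]
  have key : ∀ j, (r j : ℝ) * (2 * s) = (f:ℝ) * (γ ^ j - δ ^ j) := by
    intro j
    induction j using Nat.twoStepInduction with
    | zero => simp [hr0]
    | one => rw [hr1]; push_cast; rw [hγ_def, hδ_def]; ring
    | more j ih1 ih2 =>
      have h := hrec j
      rw [show j + 2 = j + 1 + 1 from rfl] at h ⊢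
      rw [h]
      push_cast
      have hγ2 : γ ^ 2 = 2 * (f:ℝ) * γ - 1 := by rw [hγ_def]; nlinarith [hs2]
      have hδ2 : δ ^ 2 = 2 * (f:ℝ) * δ - 1 := by rw [hδ_def]; nlinarith [hs2]
      linear_combination (2 * (f:ℝ)) * ih2 - ih1 + (f:ℝ) * γ ^ j * hγ2 - (f:ℝ) * δ ^ j * hδ2 + (2 * (f:ℝ) * (δ ^ j - γ ^ j)) * hs2
  set X : ℝ := γ ^ k with hX_def
  set Y : ℝ := δ ^ k with hY_def
  have hXpos : 0 < X := pow_pos hγpos k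
  have hX1 : 1 ≤ X := one_le_pow₀ (by linarith)
  have hYpos : 0 < Y := pow_pos hδpos k
  have hXY : X * Y = 1 := by
    rw [hX_def, hY_def, ← mul_pow, hγδ, one_pow]
  have hrk : (r k : ℝ) * (2 * s) = (f:ℝ) * (X - Y) := key k
  have hrk2 : (r k : ℝ) ^ 2 * (4 * s ^ 2) = (f:ℝ) ^ 2 * (X - Y) ^ 2 := by
    linear_combination ((r k : ℝ) * (2 * s) + (f:ℝ) * (X - Y)) * hrk
  have hA : 0 ≤ (f:ℝ)^2 * γ - 4 * s ^ 2 := by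
    rw [hγ_def]
    have hm : (f:ℝ)^2*((f:ℝ)-1) ≤ (f:ℝ)^2*s := mul_le_mul_of_nonneg_left hs1 (by positivity)
    have hq : (0:ℝ) ≤ ((f:ℝ)-2)*(2*(f:ℝ)^2-(f:ℝ)-2) := mul_nonneg (by linarith) (by nlinarith)
    nlinarith [hm, hq, hs2]
  have hbR : (b : ℝ) = (r k : ℝ) ^ 2 + 1 := by rw [hbk]; push_cast; ring
  rw [hbR]
  have hmul : 0 < γ * (4 * s ^ 2) := by positivity
  rw [← mul_lt_mul_iff_of_pos_right hmul]
  have hpow : γ ^ (2 * k - 1) * γ = X ^ 2 := by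
    rw [hX_def, ← pow_succ, ← pow_mul]
    congr 1
    omega
  calc γ ^ (2 * k - 1) * (γ * (4 * s ^ 2)) = X ^ 2 * (4 * s ^ 2) := by
        rw [← mul_assoc, hpow]
    _ < ((f:ℝ)^2 * (X - Y)^2 + 4 * s ^ 2) * γ := by
        nlinarith [mul_nonneg hA (sq_nonneg X), mul_pos (mul_pos hγpos (by positivity : (0:ℝ) < (f:ℝ)^2)) (pow_pos hYpos 2), hXY, hs2, hfR, hγpos, hX1]
    _ = ((r k : ℝ) ^ 2 + 1) * (γ * (4 * s ^ 2)) := by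
        rw [← hrk2]; ring
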